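/- Let p = Q and let 0 < r < R. The function u(x) = (log ψ(x) − log R)/(log r − log R) satisfies Δ_Q u = 0 at every point of the annulus {x : r < ψ(x) < R} where Σ ≠ 0, together with the boundary conditions u(x) = 1 whenever ψ(x) = r and u(x) = 0 whenever ψ(x) = R. -/

import Mathlib

open MeasureTheory Real Filter

noncomputable section

/-- Points of `ℝ^{2n+1}`: the `2n` horizontal coordinates indexed by `Fin n ⊕ Fin n`
(`Sum.inl i` encodes the coordinate `x_i` for `1 ≤ i ≤ n`, and `Sum.inr i` encodes the
coordinate `x_{i+n}`), together with the vertical coordinate `t`. -/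
abbrev Pt (n : ℕ) := ((Fin n ⊕ Fin n) → ℝ) × ℝ

/-- `Σ(x) = ∑_{l=1}^{2n} (x_l - a_l)²`. -/
def Sg (n : ℕ) (a : Fin n ⊕ Fin n → ℝ) (x : Pt n) : ℝ :=
  ∑ l : Fin n ⊕ Fin n, (x.1 l - a l) ^ 2

/-- Partial derivative `∂u/∂x_l` in the `l`-th horizontal coordinate direction. -/
def pdx (n : ℕ) (l : Fin n ⊕ Fin n) (u : Pt n → ℝ) (x : Pt n) : ℝ :=
  fderiv ℝ u x (Pi.single l 1, 0)

/-- Partial derivative `∂u/∂t` in the vertical direction. -/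
def pdt (n : ℕ) (u : Pt n → ℝ) (x : Pt n) : ℝ :=
  fderiv ℝ u x (0, 1)

/-- The Hörmander vector fields:
`X_i u = ∂u/∂x_i + 2kc (x_{i+n} - a_{i+n}) Σ^{k-1} ∂u/∂t` for `1 ≤ i ≤ n`, and
`X_j u = ∂u/∂x_j - 2kc (x_{j-n} - a_{j-n}) Σ^{k-1} ∂u/∂t` for `n+1 ≤ j ≤ 2n`. -/
def X (n : ℕ) (k c : ℝ) (a : Fin n ⊕ Fin n → ℝ) (l : Fin n ⊕ Fin n)
    (u : Pt n → ℝ) (x : Pt n) : ℝ :=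
  match l with
  | Sum.inl i => pdx n (Sum.inl i) u x
      + 2 * k * c * (x.1 (Sum.inr i) - a (Sum.inr i)) * Sg n a x ^ (k - 1) * pdt n u x
  | Sum.inr j => pdx n (Sum.inr j) u x
      - 2 * k * c * (x.1 (Sum.inl j) - a (Sum.inl j)) * Sg n a x ^ (k - 1) * pdt n u x

/-- Norm of the horizontal gradient `∇₀u = (X₁u, …, X_{2n}u)`. -/
def hnorm (n : ℕ) (k c : ℝ) (a : Fin n ⊕ Fin n → ℝ) (u : Pt n → ℝ) (x : Pt n) : ℝ :=
  Real.sqrt (∑ l : Fin n ⊕ Fin n, (X n k c a l u x) ^ 2)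

/-- The `p`-Laplacian `Δ_p u = ∑_{l=1}^{2n} X_l (‖∇₀u‖^{p-2} X_l u)`. -/
def pLap (n : ℕ) (k c : ℝ) (a : Fin n ⊕ Fin n → ℝ) (p : ℝ) (u : Pt n → ℝ) (x : Pt n) : ℝ :=
  ∑ l : Fin n ⊕ Fin n,
    X n k c a l (fun y => hnorm n k c a u y ^ (p - 2) * X n k c a l u y) x

/-- `h(x) = c² Σ(x)^{2k} + (t-s)²`. -/
def hfun (n : ℕ) (k c : ℝ) (a : Fin n ⊕ Fin n → ℝ) (s : ℝ) (x : Pt n) : ℝ :=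
  c ^ 2 * Sg n a x ^ (2 * k) + (x.2 - s) ^ 2

/-- `ψ = h^{1/(4k)}`. -/
def psi (n : ℕ) (k c : ℝ) (a : Fin n ⊕ Fin n → ℝ) (s : ℝ) (x : Pt n) : ℝ :=
  hfun n k c a s x ^ (1 / (4 * k))

def HasPD (n : ℕ) (f : Pt n → ℝ) (x : Pt n) (dx : (Fin n ⊕ Fin n) → ℝ) (dt : ℝ) : Prop :=
  ∃ L : Pt n →L[ℝ] ℝ, HasFDerivAt f L x ∧ (∀ l, L (Pi.single l 1, 0) = dx l) ∧ L (0, 1) = dt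

namespace HasPD
variable {n : ℕ} {f g : Pt n → ℝ} {x : Pt n} {df dg : (Fin n ⊕ Fin n) → ℝ} {dft dgt : ℝ}

theorem pdx_eq (h : HasPD n f x df dft) (l : Fin n ⊕ Fin n) : pdx n l f x = df l := by
  obtain ⟨L, hL, h1, _⟩ := h; rw [pdx, hL.fderiv]; exact h1 l

theorem pdt_eq (h : HasPD n f x df dft) : pdt n f x = dft := by
  obtain ⟨L, hL, _, h2⟩ := h; rw [pdt, hL.fderiv]; exact h2

theorem congr' (h : HasPD n f x df dft) (hfg : g =ᶠ[nhds x] f) : HasPD n g x df dft := by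
  obtain ⟨L, hL, h1, h2⟩ := h
  exact ⟨L, hL.congr_of_eventuallyEq hfg, h1, h2⟩

theorem cast (h : HasPD n f x df dft) (hdx : ∀ l, df l = dg l) (hdt : dft = dgt) :
    HasPD n f x dg dgt := by
  obtain ⟨L, hL, h1, h2⟩ := h
  exact ⟨L, hL, fun l => (h1 l).trans (hdx l), h2.trans hdt⟩

theorem const (c : ℝ) (x : Pt n) : HasPD n (fun _ => c) x (fun _ => 0) 0 :=
  ⟨0, hasFDerivAt_const c x, fun l => rfl, rfl⟩

theorem coord (l : Fin n ⊕ Fin n) (x : Pt n) :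
    HasPD n (fun y => y.1 l) x (fun l' => if l' = l then 1 else 0) 0 := by
  refine ⟨(ContinuousLinearMap.proj l).comp
      (ContinuousLinearMap.fst ℝ ((Fin n ⊕ Fin n) → ℝ) ℝ), ?_, fun l' => ?_, ?_⟩
  · exact ((ContinuousLinearMap.proj l).comp
      (ContinuousLinearMap.fst ℝ ((Fin n ⊕ Fin n) → ℝ) ℝ)).hasFDerivAt
  · simp [Pi.single_apply, eq_comm]
  · simp

theorem snd (x : Pt n) : HasPD n (fun y => y.2) x (fun _ => 0) 1 := by
  refine ⟨ContinuousLinearMap.snd ℝ ((Fin n ⊕ Fin n) → ℝ) ℝ,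
    (ContinuousLinearMap.snd ℝ ((Fin n ⊕ Fin n) → ℝ) ℝ).hasFDerivAt, fun l' => ?_, ?_⟩ <;> simp

theorem add (hf : HasPD n f x df dft) (hg : HasPD n g x dg dgt) :
    HasPD n (fun y => f y + g y) x (fun l => df l + dg l) (dft + dgt) := by
  obtain ⟨L, hL, h1, h2⟩ := hf; obtain ⟨M, hM, g1, g2⟩ := hg
  exact ⟨L + M, hL.add hM, fun l => by simp [h1 l, g1 l], by simp [h2, g2]⟩

theorem sub (hf : HasPD n f x df dft) (hg : HasPD n g x dg dgt) :
    HasPD n (fun y => f y - g y) x (fun l => df l - dg l) (dft - dgt) := by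
  obtain ⟨L, hL, h1, h2⟩ := hf; obtain ⟨M, hM, g1, g2⟩ := hg
  exact ⟨L - M, hL.sub hM, fun l => by simp [h1 l, g1 l], by simp [h2, g2]⟩

theorem mul (hf : HasPD n f x df dft) (hg : HasPD n g x dg dgt) :
    HasPD n (fun y => f y * g y) x (fun l => f x * dg l + g x * df l)
      (f x * dgt + g x * dft) := by
  obtain ⟨L, hL, h1, h2⟩ := hf; obtain ⟨M, hM, g1, g2⟩ := hg
  exact ⟨f x • M + g x • L, hL.mul hM, fun l => by simp [h1 l, g1 l], by simp [h2, g2]⟩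

theorem const_mul (hf : HasPD n f x df dft) (b : ℝ) :
    HasPD n (fun y => b * f y) x (fun l => b * df l) (b * dft) := by
  obtain ⟨L, hL, h1, h2⟩ := hf
  exact ⟨b • L, hL.const_mul b, fun l => by simp [h1 l], by simp [h2]⟩

theorem sum {ι : Type*} (t : Finset ι) (f : ι → Pt n → ℝ) (df : ι → (Fin n ⊕ Fin n) → ℝ)
    (dft : ι → ℝ) (h : ∀ i ∈ t, HasPD n (f i) x (df i) (dft i)) :
    HasPD n (fun y => ∑ i ∈ t, f i y) x (fun l => ∑ i ∈ t, df i l) (∑ i ∈ t, dft i) := by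
  classical
  induction t using Finset.induction_on with
  | empty => simpa using const 0 x
  | insert b t' hni ih =>
    simp only [Finset.sum_insert hni]
    exact (h b (Finset.mem_insert_self b t')).add
      (ih fun i hi => h i (Finset.mem_insert_of_mem hi))

theorem rpow (hf : HasPD n f x df dft) (hfx : f x ≠ 0) (p : ℝ) :
    HasPD n (fun y => f y ^ p) x (fun l => p * f x ^ (p - 1) * df l)
      (p * f x ^ (p - 1) * dft) := by
  obtain ⟨L, hL, h1, h2⟩ := hf
  exact ⟨(p * f x ^ (p - 1)) • L, hL.rpow_const (Or.inl hfx), fun l => by simp [h1 l, mul_assoc],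
    by simp [h2, mul_assoc]⟩

theorem log (hf : HasPD n f x df dft) (hfx : f x ≠ 0) :
    HasPD n (fun y => Real.log (f y)) x (fun l => (f x)⁻¹ * df l) ((f x)⁻¹ * dft) := by
  obtain ⟨L, hL, h1, h2⟩ := hf
  exact ⟨(f x)⁻¹ • L, hL.log hfx, fun l => by simp [h1 l], by simp [h2]⟩

end HasPD

section Main
variable {n : ℕ} (a : Fin n ⊕ Fin n → ℝ) (s c k : ℝ)

theorem sg_nonneg (x : Pt n) : 0 ≤ Sg n a x :=
  Finset.sum_nonneg fun l _ => sq_nonneg _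

theorem hfun_pos (hc : c ≠ 0) (x : Pt n) (hS : 0 < Sg n a x) : 0 < hfun n k c a s x := by
  have h1 : 0 < c ^ 2 * Sg n a x ^ (2 * k) :=
    mul_pos (by positivity) (Real.rpow_pos_of_pos hS _)
  have := sq_nonneg (x.2 - s)
  unfold hfun; linarith

theorem hasPD_Sg (x : Pt n) : HasPD n (Sg n a) x (fun l => 2 * (x.1 l - a l)) 0 := by
  have h1 : ∀ i : Fin n ⊕ Fin n, HasPD n (fun y => (y.1 i - a i) ^ 2) x
      (fun l => if l = i then 2 * (x.1 i - a i) else 0) 0 := by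
    intro i
    have h2 := ((HasPD.coord i x).sub (HasPD.const (a i) x)).mul
      ((HasPD.coord i x).sub (HasPD.const (a i) x))
    simp only [← pow_two] at h2
    refine h2.cast (fun l => ?_) (by ring)
    split_ifs <;> simp_all <;> ring
  have h3 := HasPD.sum (x := x) Finset.univ (fun i y => (y.1 i - a i) ^ 2)
    (fun i l => if l = i then 2 * (x.1 i - a i) else 0) (fun _ => 0) (fun i _ => h1 i)
  refine h3.cast (fun l => ?_) (by simp)
  simp

theorem hasPD_hfun (x : Pt n) (hS : 0 < Sg n a x) :
    HasPD n (hfun n k c a s) x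
      (fun l => 4 * k * c ^ 2 * Sg n a x ^ (2 * k - 1) * (x.1 l - a l)) (2 * (x.2 - s)) := by
  have h1 := (((hasPD_Sg a x).rpow hS.ne' (2 * k)).const_mul (c ^ 2)).add
    ((((HasPD.snd x).sub (HasPD.const s x)).mul ((HasPD.snd x).sub (HasPD.const s x))).cast
      (dg := fun _ => 0) (dgt := 2 * (x.2 - s)) (fun l => by ring) (by ring))
  simp only [← pow_two] at h1
  refine (h1.cast (fun l => by ring) (by ring)).cast (fun l => rfl) rfl
end Main

def vv (n : ℕ) (k c : ℝ) (a : Fin n ⊕ Fin n → ℝ) (s : ℝ) (x : Pt n) :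
    Fin n ⊕ Fin n → ℝ
  | Sum.inl i => c * Sg n a x ^ k * (x.1 (Sum.inl i) - a (Sum.inl i))
      + (x.2 - s) * (x.1 (Sum.inr i) - a (Sum.inr i))
  | Sum.inr i => c * Sg n a x ^ k * (x.1 (Sum.inr i) - a (Sum.inr i))
      - (x.2 - s) * (x.1 (Sum.inl i) - a (Sum.inl i))

def DD (r R : ℝ) : ℝ := Real.log r - Real.log R

def uu (n : ℕ) (k c : ℝ) (a : Fin n ⊕ Fin n → ℝ) (s r R : ℝ) (y : Pt n) : ℝ :=
  (Real.log (psi n k c a s y) - Real.log R) / DD r R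

section Main2
variable {n : ℕ} (a : Fin n ⊕ Fin n → ℝ) (s c k : ℝ)

theorem sg_split (x : Pt n) : Sg n a x = ∑ i : Fin n,
    ((x.1 (Sum.inl i) - a (Sum.inl i)) ^ 2 + (x.1 (Sum.inr i) - a (Sum.inr i)) ^ 2) := by
  rw [Sg, Fintype.sum_sum_type, ← Finset.sum_add_distrib]

theorem sum_sq_vv (x : Pt n) (hS : 0 < Sg n a x) :
    ∑ l : Fin n ⊕ Fin n, vv n k c a s x l ^ 2 = Sg n a x * hfun n k c a s x := by
  have hS2 : Sg n a x ^ (2 * k) = Sg n a x ^ k * Sg n a x ^ k := by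
    rw [two_mul, Real.rpow_add hS]
  rw [Fintype.sum_sum_type]
  simp only [vv]
  rw [← Finset.sum_add_distrib]
  have key : ∀ i : Fin n,
      (c * Sg n a x ^ k * (x.1 (Sum.inl i) - a (Sum.inl i))
        + (x.2 - s) * (x.1 (Sum.inr i) - a (Sum.inr i))) ^ 2
      + (c * Sg n a x ^ k * (x.1 (Sum.inr i) - a (Sum.inr i))
        - (x.2 - s) * (x.1 (Sum.inl i) - a (Sum.inl i))) ^ 2
      = hfun n k c a s x * ((x.1 (Sum.inl i) - a (Sum.inl i)) ^ 2
        + (x.1 (Sum.inr i) - a (Sum.inr i)) ^ 2) := by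
    intro i; rw [hfun, hS2]; ring
  rw [Finset.sum_congr rfl fun i _ => key i, ← Finset.mul_sum, ← sg_split]
  ring

theorem ev_Sg_pos (x : Pt n) (hS : 0 < Sg n a x) : ∀ᶠ y in nhds x, 0 < Sg n a y := by
  have hcont : Continuous (Sg n a) := by
    apply continuous_finset_sum
    intro l _
    exact (((continuous_apply l).comp continuous_fst).sub continuous_const).pow 2
  exact (isOpen_lt continuous_const hcont).eventually_mem hS

variable (r R : ℝ)

theorem hasPD_uu (hc : c ≠ 0) (hk : 0 < k) (x : Pt n) (hS : 0 < Sg n a x) :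
    HasPD n (uu n k c a s r R) x
      (fun l => c ^ 2 * Sg n a x ^ (2 * k - 1) * (x.1 l - a l) / (DD r R * hfun n k c a s x))
      ((x.2 - s) / (2 * k * DD r R * hfun n k c a s x)) := by
  have hH := hfun_pos a s c k hc x hS
  have hg := ((((hasPD_hfun a s c k x hS).log hH.ne').const_mul (1 / (4 * k))).sub
      (HasPD.const (Real.log R) x)).mul (HasPD.const (DD r R)⁻¹ x)
  have hev : uu n k c a s r R =ᶠ[nhds x]
      fun y => (1 / (4 * k) * Real.log (hfun n k c a s y) - Real.log R) * (DD r R)⁻¹ := by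
    filter_upwards [ev_Sg_pos a x hS] with y hy
    rw [uu, psi, Real.log_rpow (hfun_pos a s c k hc y hy), div_eq_mul_inv]
  refine ((hg.cast (fun l => ?_) ?_).congr' hev)
  · field_simp [hk.ne']
    ring
  · field_simp [hk.ne']
    ring
end Main2

def CC (c D Q : ℝ) : ℝ := (c ^ 2 / D ^ 2) ^ ((Q - 2) / 2) * (c / D)
def mm (k Q : ℝ) : ℝ := (2 * k - 1) * ((Q - 2) / 2) + (k - 1)
def ee (Q : ℝ) : ℝ := (Q - 2) / 2 + 1

section Main3
variable {n : ℕ} (a : Fin n ⊕ Fin n → ℝ) (s c k r R : ℝ)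

theorem X_uu (hc : c ≠ 0) (hk : 0 < k) (hD : DD r R ≠ 0) (x : Pt n) (hS : 0 < Sg n a x)
    (l : Fin n ⊕ Fin n) :
    X n k c a l (uu n k c a s r R) x
      = c * Sg n a x ^ (k - 1) * vv n k c a s x l / (DD r R * hfun n k c a s x) := by
  have hH := hfun_pos a s c k hc x hS
  have hu := hasPD_uu a s c k r R hc hk x hS
  have h2k : Sg n a x ^ (2 * k - 1) = Sg n a x ^ (k - 1) * Sg n a x ^ k := by
    rw [← Real.rpow_add hS]; congr 1; ring
  cases l with
  | inl i =>
    simp only [X, hu.pdx_eq, hu.pdt_eq, vv, h2k]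
    field_simp [hk.ne', hD]
  | inr i =>
    simp only [X, hu.pdx_eq, hu.pdt_eq, vv, h2k]
    field_simp [hk.ne', hD]

theorem hnorm_uu (hc : c ≠ 0) (hk : 0 < k) (hD : DD r R ≠ 0) (x : Pt n) (hS : 0 < Sg n a x) :
    hnorm n k c a (uu n k c a s r R) x
      = Real.sqrt (c ^ 2 * Sg n a x ^ (2 * k - 1) / (DD r R ^ 2 * hfun n k c a s x)) := by
  have hH := hfun_pos a s c k hc x hS
  rw [hnorm]
  congr 1
  rw [Finset.sum_congr rfl fun l _ => by rw [X_uu a s c k r R hc hk hD x hS l]]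
  have expand : ∀ l : Fin n ⊕ Fin n,
      (c * Sg n a x ^ (k - 1) * vv n k c a s x l / (DD r R * hfun n k c a s x)) ^ 2
      = (c * Sg n a x ^ (k - 1) / (DD r R * hfun n k c a s x)) ^ 2 * vv n k c a s x l ^ 2 := by
    intro l; ring
  rw [Finset.sum_congr rfl fun l _ => expand l, ← Finset.mul_sum,
    sum_sq_vv a s c k x hS]
  have hP2 : Sg n a x ^ (k - 1) * Sg n a x ^ (k - 1) * Sg n a x = Sg n a x ^ (2 * k - 1) := by
    rw [← Real.rpow_add hS, ← Real.rpow_add_one hS.ne']; congr 1; ring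
  field_simp [hD, hH.ne']
  rw [mul_comm k 2]
  linear_combination hP2

theorem hnormQ (hc : c ≠ 0) (hk : 0 < k) (hD : DD r R ≠ 0) (Q : ℝ) (x : Pt n)
    (hS : 0 < Sg n a x) :
    hnorm n k c a (uu n k c a s r R) x ^ (Q - 2)
      = (c ^ 2 / DD r R ^ 2) ^ ((Q - 2) / 2)
        * (Sg n a x ^ ((2 * k - 1) * ((Q - 2) / 2)) * hfun n k c a s x ^ (-((Q - 2) / 2))) := by
  have hH := hfun_pos a s c k hc x hS
  have hSnn : (0:ℝ) ≤ Sg n a x ^ (2 * k - 1) := Real.rpow_nonneg hS.le _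
  have hW : (0:ℝ) ≤ c ^ 2 * Sg n a x ^ (2 * k - 1) / (DD r R ^ 2 * hfun n k c a s x) := by
    positivity
  rw [hnorm_uu a s c k r R hc hk hD x hS]
  have h1 : Real.sqrt (c ^ 2 * Sg n a x ^ (2 * k - 1) / (DD r R ^ 2 * hfun n k c a s x)) ^ (Q - 2)
      = (c ^ 2 * Sg n a x ^ (2 * k - 1) / (DD r R ^ 2 * hfun n k c a s x)) ^ ((Q - 2) / 2) := by
    rw [Real.sqrt_eq_rpow, ← Real.rpow_mul hW]; congr 1; ring
  rw [h1]
  have h2 : c ^ 2 * Sg n a x ^ (2 * k - 1) / (DD r R ^ 2 * hfun n k c a s x)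
      = c ^ 2 / DD r R ^ 2 * (Sg n a x ^ (2 * k - 1) * (hfun n k c a s x)⁻¹) := by
    field_simp
  rw [h2, Real.mul_rpow (by positivity) (by positivity),
    Real.mul_rpow hSnn (by positivity), Real.inv_rpow hH.le, ← Real.rpow_neg hH.le,
    ← Real.rpow_mul hS.le]

theorem F_eq (hc : c ≠ 0) (hk : 0 < k) (hD : DD r R ≠ 0) (Q : ℝ) (x : Pt n)
    (hS : 0 < Sg n a x) (l : Fin n ⊕ Fin n) :
    hnorm n k c a (uu n k c a s r R) x ^ (Q - 2) * X n k c a l (uu n k c a s r R) x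
      = CC c (DD r R) Q
        * (Sg n a x ^ mm k Q * (hfun n k c a s x ^ (-(ee Q)) * vv n k c a s x l)) := by
  have hH := hfun_pos a s c k hc x hS
  rw [hnormQ a s c k r R hc hk hD Q x hS, X_uu a s c k r R hc hk hD x hS l]
  have hSm : Sg n a x ^ ((2 * k - 1) * ((Q - 2) / 2)) * Sg n a x ^ (k - 1)
      = Sg n a x ^ mm k Q := by
    rw [← Real.rpow_add hS]; rfl
  have hHe : hfun n k c a s x ^ (-((Q - 2) / 2)) * (hfun n k c a s x)⁻¹
      = hfun n k c a s x ^ (-(ee Q)) := by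
    rw [← Real.rpow_neg_one (hfun n k c a s x), ← Real.rpow_add hH]
    congr 1; rw [ee]; ring
  rw [CC, ← hSm, ← hHe]
  field_simp
end Main3

section Main4
variable {n : ℕ} (a : Fin n ⊕ Fin n → ℝ) (s c k r R Q : ℝ)

theorem pair_lemma (hc : c ≠ 0) (hk : 0 < k) (x : Pt n)
    (hS : 0 < Sg n a x) (i : Fin n) :
    X n k c a (Sum.inl i) (fun y => CC c (DD r R) Q *
        (Sg n a y ^ mm k Q * (hfun n k c a s y ^ (-(ee Q)) * vv n k c a s y (Sum.inl i)))) x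
    + X n k c a (Sum.inr i) (fun y => CC c (DD r R) Q *
        (Sg n a y ^ mm k Q * (hfun n k c a s y ^ (-(ee Q)) * vv n k c a s y (Sum.inr i)))) x
    = CC c (DD r R) Q * Sg n a x ^ (mm k Q - 1) * hfun n k c a s x ^ (-(ee Q) - 1)
      * ((2 * mm k Q * hfun n k c a s x * c * Sg n a x ^ (k - 1) * Sg n a x
          - 4 * ee Q * k * c ^ 3 * (Sg n a x ^ (k - 1)) ^ 3 * Sg n a x ^ 3
          + 4 * k * c * Sg n a x ^ (k - 1) * Sg n a x * hfun n k c a s x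
          - 4 * ee Q * k * c * Sg n a x ^ (k - 1) * Sg n a x * (x.2 - s) ^ 2)
         * ((x.1 (Sum.inl i) - a (Sum.inl i)) ^ 2 + (x.1 (Sum.inr i) - a (Sum.inr i)) ^ 2)
        + 2 * c * Sg n a x ^ (k - 1) * Sg n a x ^ 2 * hfun n k c a s x) := by
  have hH := hfun_pos a s c k hc x hS
  have hfl : (fun y => CC c (DD r R) Q *
      (Sg n a y ^ mm k Q * (hfun n k c a s y ^ (-(ee Q)) * vv n k c a s y (Sum.inl i))))
      = fun y => CC c (DD r R) Q * (Sg n a y ^ mm k Q * (hfun n k c a s y ^ (-(ee Q)) *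
        (c * Sg n a y ^ k * (y.1 (Sum.inl i) - a (Sum.inl i))
          + (y.2 - s) * (y.1 (Sum.inr i) - a (Sum.inr i))))) := by
    funext y; simp only [vv]
  have hfr : (fun y => CC c (DD r R) Q *
      (Sg n a y ^ mm k Q * (hfun n k c a s y ^ (-(ee Q)) * vv n k c a s y (Sum.inr i))))
      = fun y => CC c (DD r R) Q * (Sg n a y ^ mm k Q * (hfun n k c a s y ^ (-(ee Q)) *
        (c * Sg n a y ^ k * (y.1 (Sum.inr i) - a (Sum.inr i))
          - (y.2 - s) * (y.1 (Sum.inl i) - a (Sum.inl i))))) := by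
    funext y; simp only [vv]
  have hvl := ((((hasPD_Sg a x).rpow hS.ne' k).const_mul c).mul
      ((HasPD.coord (Sum.inl i) x).sub (HasPD.const (a (Sum.inl i)) x))).add
    (((HasPD.snd x).sub (HasPD.const s x)).mul
      ((HasPD.coord (Sum.inr i) x).sub (HasPD.const (a (Sum.inr i)) x)))
  have hvr := ((((hasPD_Sg a x).rpow hS.ne' k).const_mul c).mul
      ((HasPD.coord (Sum.inr i) x).sub (HasPD.const (a (Sum.inr i)) x))).sub
    (((HasPD.snd x).sub (HasPD.const s x)).mul
      ((HasPD.coord (Sum.inl i) x).sub (HasPD.const (a (Sum.inl i)) x)))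
  have hl := ((((hasPD_Sg a x).rpow hS.ne' (mm k Q)).mul
    (((hasPD_hfun a s c k x hS).rpow hH.ne' (-(ee Q))).mul hvl)).const_mul (CC c (DD r R) Q))
  have hr := ((((hasPD_Sg a x).rpow hS.ne' (mm k Q)).mul
    (((hasPD_hfun a s c k x hS).rpow hH.ne' (-(ee Q))).mul hvr)).const_mul (CC c (DD r R) Q))
  rw [hfl, hfr]
  simp only [X, hl.pdx_eq, hl.pdt_eq, hr.pdx_eq, hr.pdt_eq]
  simp only [reduceCtorEq, if_true, if_false, if_pos rfl, if_neg (by simp : ¬Sum.inl i = Sum.inr i),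
    if_neg (by simp : ¬Sum.inr i = Sum.inl i)]
  have hcol1 : Sg n a x ^ mm k Q = Sg n a x ^ (mm k Q - 1) * Sg n a x := by
    rw [← Real.rpow_add_one hS.ne']; congr 1; ring
  have hcol2 : Sg n a x ^ k = Sg n a x ^ (k - 1) * Sg n a x := by
    rw [← Real.rpow_add_one hS.ne']; congr 1; ring
  have hcol3 : Sg n a x ^ (2 * k - 1) = Sg n a x ^ (k - 1) * (Sg n a x ^ (k - 1) * Sg n a x) := by
    rw [← Real.rpow_add_one hS.ne', ← Real.rpow_add hS]; congr 1; ring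
  have hcol4 : hfun n k c a s x ^ (-(ee Q)) = hfun n k c a s x ^ (-(ee Q) - 1)
      * hfun n k c a s x := by
    rw [← Real.rpow_add_one hH.ne']; congr 1; ring
  rw [hcol1, hcol2, hcol3, hcol4]
  ring
end Main4

theorem X_congr {n : ℕ} (k c : ℝ) (a : Fin n ⊕ Fin n → ℝ) (l : Fin n ⊕ Fin n)
    {f g : Pt n → ℝ} {x : Pt n} (hfg : f =ᶠ[nhds x] g) :
    X n k c a l f x = X n k c a l g x := by
  cases l <;> simp only [X, pdx, pdt, hfg.fderiv_eq]

theorem stmt15 (n : ℕ) (hn : 1 ≤ n) (a : Fin n ⊕ Fin n → ℝ) (s : ℝ)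
    (c k : ℝ) (hc : c ≠ 0) (hk : 0 < k)
    (Q : ℝ) (hQ : Q = 2 * n + 2 * k) (r R : ℝ) (hr : 0 < r) (hrR : r < R) :
    (∀ x : Pt n, r < psi n k c a s x → psi n k c a s x < R → Sg n a x ≠ 0 →
      pLap n k c a Q
        (fun y => (Real.log (psi n k c a s y) - Real.log R) / (Real.log r - Real.log R)) x = 0)
    ∧ (∀ x : Pt n, psi n k c a s x = r →
        (Real.log (psi n k c a s x) - Real.log R) / (Real.log r - Real.log R) = 1)
    ∧ (∀ x : Pt n, psi n k c a s x = R →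
        (Real.log (psi n k c a s x) - Real.log R) / (Real.log r - Real.log R) = 0) := by
  have hlog : Real.log r < Real.log R := Real.log_lt_log hr hrR
  have hD : DD r R ≠ 0 := by rw [DD]; exact sub_ne_zero.mpr hlog.ne
  refine ⟨?_, ?_, ?_⟩
  · intro x _h1 _h2 hSne
    have hS : 0 < Sg n a x := (sg_nonneg a x).lt_of_ne (Ne.symm hSne)
    have hH := hfun_pos a s c k hc x hS
    show pLap n k c a Q (uu n k c a s r R) x = 0
    rw [pLap, Fintype.sum_sum_type, ← Finset.sum_add_distrib]
    have hXF : ∀ l : Fin n ⊕ Fin n,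
        X n k c a l (fun y => hnorm n k c a (uu n k c a s r R) y ^ (Q - 2)
          * X n k c a l (uu n k c a s r R) y) x
        = X n k c a l (fun y => CC c (DD r R) Q * (Sg n a y ^ mm k Q
            * (hfun n k c a s y ^ (-(ee Q)) * vv n k c a s y l))) x := by
      intro l
      refine X_congr k c a l ?_
      filter_upwards [ev_Sg_pos a x hS] with y hy
      exact F_eq a s c k r R hc hk hD Q y hy l
    have hstep : ∑ i : Fin n,
        (X n k c a (Sum.inl i) (fun y => hnorm n k c a (uu n k c a s r R) y ^ (Q - 2)
            * X n k c a (Sum.inl i) (uu n k c a s r R) y) x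
          + X n k c a (Sum.inr i) (fun y => hnorm n k c a (uu n k c a s r R) y ^ (Q - 2)
            * X n k c a (Sum.inr i) (uu n k c a s r R) y) x)
        = ∑ i : Fin n, (CC c (DD r R) Q * Sg n a x ^ (mm k Q - 1)
            * hfun n k c a s x ^ (-(ee Q) - 1)
          * ((2 * mm k Q * hfun n k c a s x * c * Sg n a x ^ (k - 1) * Sg n a x
              - 4 * ee Q * k * c ^ 3 * (Sg n a x ^ (k - 1)) ^ 3 * Sg n a x ^ 3
              + 4 * k * c * Sg n a x ^ (k - 1) * Sg n a x * hfun n k c a s x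
              - 4 * ee Q * k * c * Sg n a x ^ (k - 1) * Sg n a x * (x.2 - s) ^ 2)
             * ((x.1 (Sum.inl i) - a (Sum.inl i)) ^ 2 + (x.1 (Sum.inr i) - a (Sum.inr i)) ^ 2)
            + 2 * c * Sg n a x ^ (k - 1) * Sg n a x ^ 2 * hfun n k c a s x)) := by
      refine Finset.sum_congr rfl fun i _ => ?_
      rw [hXF (Sum.inl i), hXF (Sum.inr i)]
      exact pair_lemma a s c k r R Q hc hk x hS i
    rw [hstep]
    have hexp : ∀ i : Fin n, (CC c (DD r R) Q * Sg n a x ^ (mm k Q - 1)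
            * hfun n k c a s x ^ (-(ee Q) - 1)
          * ((2 * mm k Q * hfun n k c a s x * c * Sg n a x ^ (k - 1) * Sg n a x
              - 4 * ee Q * k * c ^ 3 * (Sg n a x ^ (k - 1)) ^ 3 * Sg n a x ^ 3
              + 4 * k * c * Sg n a x ^ (k - 1) * Sg n a x * hfun n k c a s x
              - 4 * ee Q * k * c * Sg n a x ^ (k - 1) * Sg n a x * (x.2 - s) ^ 2)
             * ((x.1 (Sum.inl i) - a (Sum.inl i)) ^ 2 + (x.1 (Sum.inr i) - a (Sum.inr i)) ^ 2)
            + 2 * c * Sg n a x ^ (k - 1) * Sg n a x ^ 2 * hfun n k c a s x))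
        = (CC c (DD r R) Q * Sg n a x ^ (mm k Q - 1)
            * hfun n k c a s x ^ (-(ee Q) - 1)
          * (2 * mm k Q * hfun n k c a s x * c * Sg n a x ^ (k - 1) * Sg n a x
              - 4 * ee Q * k * c ^ 3 * (Sg n a x ^ (k - 1)) ^ 3 * Sg n a x ^ 3
              + 4 * k * c * Sg n a x ^ (k - 1) * Sg n a x * hfun n k c a s x
              - 4 * ee Q * k * c * Sg n a x ^ (k - 1) * Sg n a x * (x.2 - s) ^ 2))
             * ((x.1 (Sum.inl i) - a (Sum.inl i)) ^ 2 + (x.1 (Sum.inr i) - a (Sum.inr i)) ^ 2)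
            + (CC c (DD r R) Q * Sg n a x ^ (mm k Q - 1)
            * hfun n k c a s x ^ (-(ee Q) - 1)
            * (2 * c * Sg n a x ^ (k - 1) * Sg n a x ^ 2 * hfun n k c a s x)) := by
      intro i; ring
    rw [Finset.sum_congr rfl fun i _ => hexp i, Finset.sum_add_distrib, ← Finset.mul_sum,
      Finset.sum_const, Finset.card_univ, Fintype.card_fin, ← sg_split a x, nsmul_eq_mul]
    have hkey : 2 * mm k Q + 4 * k + 2 * (n:ℝ) - 4 * ee Q * k = 0 := by
      rw [mm, ee, hQ]; ring
    have hs2k : Sg n a x ^ (2 * k)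
        = Sg n a x ^ (k - 1) * (Sg n a x ^ (k - 1) * (Sg n a x * Sg n a x)) := by
      rw [show (2 * k : ℝ) = (k - 1) + ((k - 1) + (1 + 1)) by ring, Real.rpow_add hS,
        Real.rpow_add hS, Real.rpow_add hS, Real.rpow_one]
    have hHdef : hfun n k c a s x = c ^ 2 * (Sg n a x ^ (k - 1)
        * (Sg n a x ^ (k - 1) * (Sg n a x * Sg n a x))) + (x.2 - s) ^ 2 := by
      rw [hfun, hs2k]
    linear_combination
      (CC c (DD r R) Q * Sg n a x ^ (mm k Q - 1) * hfun n k c a s x ^ (-(ee Q) - 1)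
        * c * Sg n a x ^ (k - 1) * Sg n a x ^ 2 * hfun n k c a s x) * hkey
      + (4 * ee Q * k * c * Sg n a x ^ (k - 1) * Sg n a x ^ 2
        * (CC c (DD r R) Q * Sg n a x ^ (mm k Q - 1)
          * hfun n k c a s x ^ (-(ee Q) - 1))) * hHdef
  · intro x hx
    rw [hx]
    exact div_self (sub_ne_zero.mpr hlog.ne)
  · intro x hx
    rw [hx]
    simp
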